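/- arXiv:2405.05344 — 2 statements merged into one kernel-verified Lean document; each statement's English description precedes it below -/
import Mathlib

section
/- Let $g_1,\ldots,g_p$ be i.i.d. standard normal random variables and let $|g|_{(1)} \ge \cdots \ge |g|_{(p)}$ denote the order statistics of their absolute values. Then for all $2 \le k \le p$, $\mathbb{E}|g|_{(k)} \le \sqrt{2\log(2p/(k-1))}$. -/
open MeasureTheory ProbabilityTheory

open scoped ENNReal NNReal

/-- The `k`-th largest entry (1-indexed) of a vector `v : Fin p → ℝ`. -/
noncomputable def kthLargest {p : ℕ} (v : Fin p → ℝ) (k : ℕ) : ℝ :=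
  sSup {x : ℝ | k ≤ (Finset.univ.filter fun i => x ≤ v i).card}

section klemmas
variable {p k : ℕ} (v : Fin p → ℝ) (hk1 : 1 ≤ k) (hkp : k ≤ p)

include hk1 hkp in
lemma kth_setNonempty : {x : ℝ | k ≤ (Finset.univ.filter fun i => x ≤ v i).card}.Nonempty := by
  have hp : 0 < p := lt_of_lt_of_le hk1 hkp
  have hne : (Finset.univ : Finset (Fin p)).Nonempty := ⟨⟨0, hp⟩, Finset.mem_univ _⟩
  refine ⟨Finset.univ.inf' hne v, ?_⟩
  have : (Finset.univ.filter fun i => Finset.univ.inf' hne v ≤ v i) = Finset.univ := by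
    apply Finset.filter_true_of_mem
    intro i _
    exact Finset.inf'_le v (Finset.mem_univ i)
  simp only [Set.mem_setOf_eq, this, Finset.card_univ, Fintype.card_fin]
  exact hkp

include hk1 hkp in
lemma kth_bddAbove : BddAbove {x : ℝ | k ≤ (Finset.univ.filter fun i => x ≤ v i).card} := by
  have hp : 0 < p := lt_of_lt_of_le hk1 hkp
  have hne : (Finset.univ : Finset (Fin p)).Nonempty := ⟨⟨0, hp⟩, Finset.mem_univ _⟩
  refine ⟨Finset.univ.sup' hne v, ?_⟩
  intro x hx
  simp only [Set.mem_setOf_eq] at hx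
  have hcard : 0 < (Finset.univ.filter fun i => x ≤ v i).card := lt_of_lt_of_le hk1 hx
  obtain ⟨i, hi⟩ := Finset.card_pos.mp hcard
  have := (Finset.mem_filter.mp hi).2
  exact this.trans (Finset.le_sup' v (Finset.mem_univ i))

include hk1 hkp in
/-- The key fact: at least `k` coordinates are `≥` the `k`-th largest value. -/
lemma kth_card : k ≤ (Finset.univ.filter fun i => kthLargest v k ≤ v i).card := by
  set U := {x : ℝ | k ≤ (Finset.univ.filter fun i => x ≤ v i).card} with hU
  set s := kthLargest v k with hs
  have hUne := kth_setNonempty v hk1 hkp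
  by_contra h
  push_neg at h
  set T := (Finset.univ.filter fun i => v i < s) with hT
  by_cases hTne : T.Nonempty
  · set m := T.sup' hTne v with hm
    have hms : m < s := by
      apply Finset.sup'_lt_iff hTne |>.mpr
      intro i hi
      exact (Finset.mem_filter.mp hi).2
    set x := (m + s) / 2 with hxdef
    have hmx : m < x := by rw [hxdef]; linarith
    have hxs : x < s := by rw [hxdef]; linarith
    have hxU : x ∈ U := by
      obtain ⟨y, hyU, hxy⟩ := exists_lt_of_lt_csSup hUne hxs
      simp only [hU, Set.mem_setOf_eq] at hyU ⊢
      refine hyU.trans (Finset.card_le_card ?_)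
      intro i hi
      simp only [Finset.mem_filter, Finset.mem_univ, true_and] at hi ⊢
      exact hxy.le.trans hi
    have hsub : (Finset.univ.filter fun i => x ≤ v i) ⊆
        (Finset.univ.filter fun i => s ≤ v i) := by
      intro i hi
      simp only [Finset.mem_filter, Finset.mem_univ, true_and] at hi ⊢
      by_contra hvi
      push_neg at hvi
      have hiT : i ∈ T := Finset.mem_filter.mpr ⟨Finset.mem_univ i, hvi⟩
      have : v i ≤ m := Finset.le_sup' v hiT
      linarith
    have : k ≤ (Finset.univ.filter fun i => s ≤ v i).card :=
      le_trans hxU (Finset.card_le_card hsub)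
    omega
  · have : (Finset.univ.filter fun i => s ≤ v i) = Finset.univ := by
      apply Finset.filter_true_of_mem
      intro i _
      by_contra hvi
      push_neg at hvi
      exact hTne ⟨i, Finset.mem_filter.mpr ⟨Finset.mem_univ i, hvi⟩⟩
    rw [this] at h
    simp only [Finset.card_univ, Fintype.card_fin] at h
    omega

include hk1 hkp in
lemma kth_nonneg (hv : ∀ i, 0 ≤ v i) : 0 ≤ kthLargest v k := by
  apply le_csSup (kth_bddAbove v hk1 hkp)
  have : (Finset.univ.filter fun i => (0:ℝ) ≤ v i) = Finset.univ :=
    Finset.filter_true_of_mem fun i _ => hv i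
  simp only [Set.mem_setOf_eq, this, Finset.card_univ, Fintype.card_fin]
  exact hkp

include hk1 hkp in
lemma kth_eq_sup :
    kthLargest v k = (Finset.univ.powersetCard k).sup'
      (Finset.powersetCard_nonempty.mpr (by simpa using hkp))
      (fun S => if h : S.Nonempty then S.inf' h v else 0) := by
  apply le_antisymm
  · obtain ⟨S, hSsub, hScard⟩ := Finset.exists_subset_card_eq (kth_card v hk1 hkp)
    have hSne : S.Nonempty := Finset.card_pos.mp (by omega)
    have hSmem : S ∈ Finset.univ.powersetCard k :=
      Finset.mem_powersetCard.mpr ⟨Finset.subset_univ S, hScard⟩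
    refine le_trans ?_ (Finset.le_sup' _ hSmem)
    rw [dif_pos hSne]
    apply Finset.le_inf' hSne
    intro i hi
    exact (Finset.mem_filter.mp (hSsub hi)).2
  · apply Finset.sup'_le
    intro S hS
    obtain ⟨hSsub, hScard⟩ := Finset.mem_powersetCard.mp hS
    have hSne : S.Nonempty := Finset.card_pos.mp (by omega)
    rw [dif_pos hSne]
    apply le_csSup (kth_bddAbove v hk1 hkp)
    simp only [Set.mem_setOf_eq]
    calc k = S.card := hScard.symm
    _ ≤ (Finset.univ.filter fun i => S.inf' hSne v ≤ v i).card := by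
        apply Finset.card_le_card
        intro i hi
        exact Finset.mem_filter.mpr ⟨Finset.mem_univ i, Finset.inf'_le v hi⟩

end klemmas

lemma measurable_finset_inf' {Ω : Type*} [MeasurableSpace Ω] {ι : Type*} {S : Finset ι}
    (hS : S.Nonempty) {f : ι → Ω → ℝ} (hf : ∀ i ∈ S, Measurable (f i)) :
    Measurable fun ω => S.inf' hS fun i => f i ω := by
  have heq : (fun ω => S.inf' hS fun i => f i ω) = S.inf' hS f :=
    funext fun ω => (Finset.inf'_apply hS f ω).symm
  rw [heq]
  exact Finset.inf'_induction hS f (fun _f hf _g hg => Measurable.inf hf hg) hf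

lemma pdf_key (t x : ℝ) :
    gaussianPDFReal 0 1 x * Real.exp (t * x)
      = Real.exp (t ^ 2 / 2) * gaussianPDFReal t 1 x := by
  simp only [gaussianPDFReal, NNReal.coe_one, mul_one, sub_zero]
  rw [mul_assoc, ← Real.exp_add, mul_comm (Real.exp (t ^ 2 / 2)), mul_assoc, ← Real.exp_add]
  ring_nf

lemma gauss_mgf (t : ℝ) :
    Integrable (fun x => Real.exp (t * x)) (gaussianReal 0 1) ∧
    ∫ x, Real.exp (t * x) ∂(gaussianReal 0 1) = Real.exp (t ^ 2 / 2) := by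
  have h1 : (1 : NNReal) ≠ 0 := one_ne_zero
  have hγ : gaussianReal 0 1
      = MeasureTheory.volume.withDensity
        (fun x => ((gaussianPDFReal 0 1 x).toNNReal : ℝ≥0∞)) := by
    rw [gaussianReal_of_var_ne_zero 0 h1]
    rfl
  have hmeas : Measurable (fun x => (gaussianPDFReal 0 1 x).toNNReal) :=
    (measurable_gaussianPDFReal 0 1).real_toNNReal
  have hsmul : ∀ x : ℝ, ((gaussianPDFReal 0 1 x).toNNReal : ℝ) • Real.exp (t * x)
      = Real.exp (t ^ 2 / 2) * gaussianPDFReal t 1 x := by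
    intro x
    rw [smul_eq_mul, Real.coe_toNNReal _ (gaussianPDFReal_nonneg 0 1 x), pdf_key]
  constructor
  · rw [hγ, integrable_withDensity_iff_integrable_coe_smul hmeas]
    simp_rw [hsmul]
    exact (integrable_gaussianPDFReal t 1).const_mul _
  · rw [hγ, integral_withDensity_eq_integral_smul hmeas]
    simp_rw [NNReal.smul_def, hsmul]
    rw [integral_const_mul, integral_gaussianPDFReal_eq_one t h1, mul_one]

lemma mgf_abs {Ω : Type*} [MeasureSpace Ω] [IsProbabilityMeasure (ℙ : Measure Ω)]
    (c : ℝ) {X : Ω → ℝ} (hm : Measurable X) (hg : Measure.map X ℙ = gaussianReal 0 1) :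
    Integrable (fun ω => Real.exp (c * |X ω|)) ℙ ∧
    ∫ ω, Real.exp (c * |X ω|) ∂ℙ ≤ 2 * Real.exp (c ^ 2 / 2) := by
  have hcont : Continuous fun x : ℝ => Real.exp (c * |x|) := by fun_prop
  have hbound : ∀ x : ℝ, Real.exp (c * |x|)
      ≤ Real.exp (c * x) + Real.exp (-c * x) := by
    intro x
    rcases abs_cases x with ⟨h, _⟩ | ⟨h, _⟩
    · rw [h]
      exact le_add_of_nonneg_right (Real.exp_pos _).le
    · rw [h, mul_neg, ← neg_mul]
      exact le_add_of_nonneg_left (Real.exp_pos _).le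
  have hint1 := (gauss_mgf c).1
  have hint2 : Integrable (fun x => Real.exp (-c * x)) (gaussianReal 0 1) := (gauss_mgf (-c)).1
  have hintsum : Integrable (fun x => Real.exp (c * x) + Real.exp (-c * x)) (gaussianReal 0 1) :=
    hint1.add hint2
  have hintγ : Integrable (fun x => Real.exp (c * |x|)) (gaussianReal 0 1) := by
    refine hintsum.mono hcont.aestronglyMeasurable (ae_of_all _ fun x => ?_)
    rw [Real.norm_eq_abs, abs_of_pos (Real.exp_pos _)]
    exact (hbound x).trans (le_abs_self _)
  have hiγ : ∫ x, Real.exp (c * |x|) ∂(gaussianReal 0 1) ≤ 2 * Real.exp (c ^ 2 / 2) := by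
    calc ∫ x, Real.exp (c * |x|) ∂(gaussianReal 0 1)
        ≤ ∫ x, (Real.exp (c * x) + Real.exp (-c * x)) ∂(gaussianReal 0 1) :=
          integral_mono hintγ hintsum hbound
    _ = Real.exp (c ^ 2 / 2) + Real.exp ((-c) ^ 2 / 2) := by
          rw [integral_add hint1 hint2, (gauss_mgf c).2, (gauss_mgf (-c)).2]
    _ = 2 * Real.exp (c ^ 2 / 2) := by rw [neg_pow]; ring_nf
  have hasm : AEStronglyMeasurable (fun x : ℝ => Real.exp (c * |x|)) (Measure.map X ℙ) :=
    hcont.aestronglyMeasurable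
  constructor
  · have := (integrable_map_measure hasm hm.aemeasurable).mp (by rw [hg]; exact hintγ)
    exact this
  · have heq : ∫ ω, Real.exp (c * |X ω|) ∂ℙ
        = ∫ x, Real.exp (c * |x|) ∂(Measure.map X ℙ) :=
      (integral_map hm.aemeasurable hasm).symm
    rw [heq, hg]
    exact hiγ

/-- Expected value of Gaussian order statistics: for `2 ≤ k ≤ p`,
`E |g|_(k) ≤ √(2 log(2p/(k-1)))`. -/
theorem gaussian_order_stat_mean_bound {Ω : Type*} [MeasureSpace Ω]
    [IsProbabilityMeasure (ℙ : Measure Ω)]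
    (p : ℕ) (g : Fin p → Ω → ℝ)
    (hmeas : ∀ i, Measurable (g i))
    (hindep : iIndepFun g ℙ)
    (hgauss : ∀ i, Measure.map (g i) ℙ = gaussianReal 0 1)
    (k : ℕ) (hk : 2 ≤ k) (hkp : k ≤ p) :
    ∫ ω, kthLargest (fun i => |g i ω|) k ∂ℙ ≤
      Real.sqrt (2 * Real.log (2 * p / ((k : ℝ) - 1))) := by
  have hk1 : 1 ≤ k := le_trans one_le_two hk
  set L := Real.log (2 * p / ((k : ℝ) - 1)) with hL
  set c := Real.sqrt (2 * L) with hc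
  have hk1R : (1:ℝ) ≤ (k:ℝ) - 1 := by
    have : (2:ℝ) ≤ (k:ℝ) := by exact_mod_cast hk
    linarith
  have hpk : ((k:ℝ) - 1) ≤ (p:ℝ) := by
    have : (k:ℝ) ≤ (p:ℝ) := by exact_mod_cast hkp
    linarith
  have hp1 : (1:ℝ) ≤ (p:ℝ) := le_trans hk1R hpk
  have hratio2 : (2:ℝ) ≤ 2 * p / ((k:ℝ) - 1) := by
    rw [le_div_iff₀ (by linarith)]
    nlinarith
  have hLlog2 : Real.log 2 ≤ L := Real.log_le_log (by norm_num) hratio2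
  have h2L1 : (1:ℝ) ≤ 2 * L := by
    have h4 : (1:ℝ) ≤ Real.log 4 := by
      rw [Real.le_log_iff_exp_le (by norm_num)]
      have := Real.exp_one_lt_d9
      linarith
    have h42 : Real.log 4 = 2 * Real.log 2 := by
      rw [show (4:ℝ) = 2 ^ 2 by norm_num, Real.log_pow]
      push_cast
      ring
    linarith
  have hcpos : (0:ℝ) < c := Real.sqrt_pos.mpr (by linarith)
  have hc1 : (1:ℝ) ≤ c := by
    calc (1:ℝ) = Real.sqrt 1 := Real.sqrt_one.symm
    _ ≤ Real.sqrt (2 * L) := Real.sqrt_le_sqrt (by linarith)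
  have hcsq : c ^ 2 = 2 * L := Real.sq_sqrt (by linarith)
  set X := fun ω => kthLargest (fun i => |g i ω|) k with hX
  -- measurability of X
  have hne : (Finset.univ.powersetCard k : Finset (Finset (Fin p))).Nonempty :=
    Finset.powersetCard_nonempty.mpr (by simpa using hkp)
  have hXmeas : Measurable X := by
    have heq : X = fun ω => (Finset.univ.powersetCard k).sup' hne
        (fun S => if h : S.Nonempty then S.inf' h (fun i => |g i ω|) else 0) :=
      funext fun ω => kth_eq_sup _ hk1 hkp
    rw [heq]
    have heq2 : (fun ω => (Finset.univ.powersetCard k).sup'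
          (hne) (fun S => if h : S.Nonempty then S.inf' h (fun i => |g i ω|) else 0))
        = (Finset.univ.powersetCard k).sup' hne
          (fun S ω => if h : S.Nonempty then S.inf' h (fun i => |g i ω|) else 0) :=
      funext fun ω => (Finset.sup'_apply hne
        (fun S ω => if h : S.Nonempty then S.inf' h (fun i => |g i ω|) else 0) ω).symm
    rw [heq2]
    apply Finset.measurable_sup' hne
    intro S _
    by_cases h : S.Nonempty
    · simp only [dif_pos h]
      exact measurable_finset_inf' h (fun i _ => (hmeas i).abs)
    · simp only [dif_neg h]
      exact measurable_const
  have hXnn : ∀ ω, 0 ≤ X ω := fun ω => kth_nonneg _ hk1 hkp (fun i => abs_nonneg _)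
  -- key pointwise inequality
  have hkey : ∀ ω, (k:ℝ) * Real.exp (c * X ω) ≤ ∑ i, Real.exp (c * |g i ω|) := by
    intro ω
    set F := Finset.univ.filter fun i => X ω ≤ |g i ω| with hF
    have hcard : k ≤ F.card := kth_card _ hk1 hkp
    have step1 : (k:ℝ) * Real.exp (c * X ω) ≤ (F.card : ℝ) * Real.exp (c * X ω) := by
      apply mul_le_mul_of_nonneg_right _ (Real.exp_pos _).le
      exact_mod_cast hcard
    have step2 : (F.card : ℝ) * Real.exp (c * X ω) ≤ ∑ i ∈ F, Real.exp (c * |g i ω|) := by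
      have := Finset.card_nsmul_le_sum F (fun i => Real.exp (c * |g i ω|))
        (Real.exp (c * X ω)) (fun i hi => by
          apply Real.exp_le_exp.mpr
          exact mul_le_mul_of_nonneg_left (Finset.mem_filter.mp hi).2 hcpos.le)
      simpa [nsmul_eq_mul] using this
    have step3 : ∑ i ∈ F, Real.exp (c * |g i ω|) ≤ ∑ i, Real.exp (c * |g i ω|) :=
      Finset.sum_le_sum_of_subset_of_nonneg (Finset.filter_subset _ _)
        (fun i _ _ => (Real.exp_pos _).le)
    linarith
  -- integrability facts
  have hiInt : ∀ i, Integrable (fun ω => Real.exp (c * |g i ω|)) ℙ :=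
    fun i => (mgf_abs c (hmeas i) (hgauss i)).1
  have hiVal : ∀ i, ∫ ω, Real.exp (c * |g i ω|) ∂ℙ ≤ 2 * Real.exp (c ^ 2 / 2) :=
    fun i => (mgf_abs c (hmeas i) (hgauss i)).2
  have hSumInt : Integrable (fun ω => ∑ i, Real.exp (c * |g i ω|)) ℙ :=
    integrable_finset_sum _ (fun i _ => hiInt i)
  have hexpXmeas : Measurable fun ω => Real.exp (c * X ω) :=
    Real.measurable_exp.comp (hXmeas.const_mul c)
  have hbnd : ∀ ω, Real.exp (c * X ω) ≤ ∑ i, Real.exp (c * |g i ω|) := by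
    intro ω
    have hk0 : (1:ℝ) ≤ (k:ℝ) := by exact_mod_cast hk1
    nlinarith [hkey ω, Real.exp_pos (c * X ω)]
  have hexpXint : Integrable (fun ω => Real.exp (c * X ω)) ℙ := by
    refine hSumInt.mono hexpXmeas.aestronglyMeasurable (ae_of_all _ fun ω => ?_)
    rw [Real.norm_eq_abs, abs_of_pos (Real.exp_pos _)]
    exact (hbnd ω).trans (le_abs_self _)
  have hXint : Integrable X ℙ := by
    refine hexpXint.mono hXmeas.aestronglyMeasurable (ae_of_all _ fun ω => ?_)
    rw [Real.norm_eq_abs, abs_of_nonneg (hXnn ω), Real.norm_eq_abs,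
      abs_of_pos (Real.exp_pos _)]
    have h1 : X ω ≤ c * X ω := by nlinarith [hXnn ω]
    have h2 : c * X ω ≤ Real.exp (c * X ω) := by
      linarith [Real.add_one_le_exp (c * X ω)]
    linarith
  -- Jensen's inequality
  have hjensen : Real.exp (c * ∫ ω, X ω ∂ℙ) ≤ ∫ ω, Real.exp (c * X ω) ∂ℙ := by
    have h := convexOn_exp.map_integral_le (f := fun ω => c * X ω)
      Real.continuous_exp.continuousOn isClosed_univ
      (ae_of_all _ fun ω => Set.mem_univ _) (hXint.const_mul c)
      (by exact hexpXint)
    rwa [integral_const_mul] at h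
  -- bound the integral of exp(cX)
  have hIbound : ∫ ω, Real.exp (c * X ω) ∂ℙ
      ≤ 2 * p / ((k:ℝ) - 1) * Real.exp (c ^ 2 / 2) := by
    have h2 : ∫ ω, (k:ℝ) * Real.exp (c * X ω) ∂ℙ
        ≤ ∫ ω, (∑ i, Real.exp (c * |g i ω|)) ∂ℙ :=
      integral_mono (hexpXint.const_mul _) hSumInt hkey
    rw [integral_const_mul, integral_finset_sum _ (fun i _ => hiInt i)] at h2
    have h4 : ∑ i : Fin p, ∫ ω, Real.exp (c * |g i ω|) ∂ℙ
        ≤ (p:ℝ) * (2 * Real.exp (c ^ 2 / 2)) := by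
      calc ∑ i : Fin p, ∫ ω, Real.exp (c * |g i ω|) ∂ℙ
          ≤ ∑ _i : Fin p, 2 * Real.exp (c ^ 2 / 2) :=
            Finset.sum_le_sum (fun i _ => hiVal i)
      _ = (p:ℝ) * (2 * Real.exp (c ^ 2 / 2)) := by
            simp [Finset.sum_const, Finset.card_univ, nsmul_eq_mul]
    have hInonneg : 0 ≤ ∫ ω, Real.exp (c * X ω) ∂ℙ :=
      integral_nonneg (fun ω => (Real.exp_pos _).le)
    rw [div_mul_eq_mul_div, le_div_iff₀ (by linarith : (0:ℝ) < (k:ℝ) - 1)]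
    have hk0 : (1:ℝ) ≤ (k:ℝ) := by exact_mod_cast hk1
    nlinarith [h2, h4]
  -- conclude
  have hfinal : Real.exp (c * ∫ ω, X ω ∂ℙ) ≤ Real.exp (c ^ 2) := by
    calc Real.exp (c * ∫ ω, X ω ∂ℙ) ≤ ∫ ω, Real.exp (c * X ω) ∂ℙ := hjensen
    _ ≤ 2 * p / ((k:ℝ) - 1) * Real.exp (c ^ 2 / 2) := hIbound
    _ = Real.exp L * Real.exp (c ^ 2 / 2) := by
        rw [Real.exp_log (by linarith : (0:ℝ) < 2 * p / ((k:ℝ) - 1))]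
    _ = Real.exp (L + c ^ 2 / 2) := (Real.exp_add _ _).symm
    _ = Real.exp (c ^ 2) := by rw [hcsq]; ring_nf
  have hle : c * ∫ ω, X ω ∂ℙ ≤ c ^ 2 := Real.exp_le_exp.mp hfinal
  have hres : ∫ ω, X ω ∂ℙ ≤ c := by nlinarith [hcpos]
  exact hres
end

section
/- Let $y = X\beta + z$, let $\hat{\beta}^L$ be a Lasso solution with tuning parameter $\lambda$, and let $\tilde{\beta}^O = \eta_\lambda(\beta + X^T z/n)$ be the oracle soft thresholding estimator. Suppose there exists a set $S_* \subseteq \{1,\ldots,p\}$ containing the supports of $\hat{\beta}^L$, $\tilde{\beta}^O$, and $\beta$, such that all eigenvalues of $X_{S_*}^T X_{S_*}/n$ lie in $[1-\Delta, 1+\Delta]$ for some $\Delta \in (0,1)$. Then $\|\tilde{\beta}^O - \hat{\beta}^L\|_2 \le \frac{\Delta}{1-\Delta}\|\tilde{\beta}^O - \beta\|_2$. -/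
set_option maxHeartbeats 1000000

open Matrix

/-- The soft thresholding function `η_λ(u) = sign(u)(|u| - λ)₊`. -/
noncomputable def softThreshold (lam u : ℝ) : ℝ :=
  Real.sign u * max (|u| - lam) 0

lemma soft_subgrad (lam u b : ℝ) (hlam : 0 < lam) :
    (u - softThreshold lam u) * (b - softThreshold lam u) ≤
      lam * (|b| - |softThreshold lam u|) := by
  unfold softThreshold
  rcases le_or_gt |u| lam with h | h
  · rw [max_eq_right (by linarith), mul_zero]
    simp only [sub_zero, abs_zero]
    have h1 : u * b ≤ |u| * |b| := (le_abs_self _).trans (le_of_eq (abs_mul u b))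
    have h2 : |u| * |b| ≤ lam * |b| := mul_le_mul_of_nonneg_right h (abs_nonneg b)
    linarith
  · rw [max_eq_left (by linarith)]
    rcases lt_trichotomy u 0 with hu | hu | hu
    · have habs : |u| = -u := abs_of_neg hu
      rw [habs] at h ⊢
      have he : Real.sign u * (-u - lam) = u + lam := by
        rw [Real.sign_of_neg hu]; ring
      rw [he, abs_of_neg (show u + lam < 0 by linarith)]
      have h1 := le_abs_self b
      have h2 := neg_abs_le b
      nlinarith
    · simp [hu] at h; linarith
    · have habs : |u| = u := abs_of_pos hu
      rw [habs] at h ⊢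
      rw [Real.sign_of_pos hu, one_mul, abs_of_pos (show (0:ℝ) < u - lam by linarith)]
      have h1 := le_abs_self b
      nlinarith

lemma sum_sq_comb {ι : Type*} [Fintype ι] (a c : ℝ) (f g : ι → ℝ) :
    ∑ j, (a * f j + c * g j) ^ 2 =
      a ^ 2 * ∑ j, (f j) ^ 2 + 2 * a * c * ∑ j, f j * g j + c ^ 2 * ∑ j, (g j) ^ 2 := by
  rw [Finset.mul_sum, Finset.mul_sum, Finset.mul_sum, ← Finset.sum_add_distrib,
    ← Finset.sum_add_distrib]
  exact Finset.sum_congr rfl (fun j _ => by ring)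

lemma mulVec_lin {n p : ℕ} (X : Matrix (Fin n) (Fin p) ℝ) (a c : ℝ) (w d : Fin p → ℝ)
    (i : Fin n) :
    X.mulVec (fun j => a * w j + c * d j) i = a * X.mulVec w i + c * X.mulVec d i := by
  simp [Matrix.mulVec, dotProduct, Finset.mul_sum, mul_add, Finset.sum_add_distrib,
    mul_comm, mul_left_comm]

lemma transpose_dot {n p : ℕ} (X : Matrix (Fin n) (Fin p) ℝ) (z : Fin n → ℝ) (d : Fin p → ℝ) :
    ∑ j, Xᵀ.mulVec z j * d j = ∑ i, z i * X.mulVec d i := by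
  simp only [Matrix.mulVec, dotProduct, transpose_apply, Finset.sum_mul, Finset.mul_sum]
  rw [Finset.sum_comm]
  exact Finset.sum_congr rfl (fun i _ => Finset.sum_congr rfl (fun j _ => by ring))

/-- If the supports of the Lasso solution `bL`, the oracle estimator `bO` and the truth `β`
are contained in a set `S` on which the eigenvalues of `X_Sᵀ X_S / n` lie in `[1-Δ, 1+Δ]`,
then `‖bO - bL‖₂ ≤ (Δ/(1-Δ)) ‖bO - β‖₂`. -/
theorem lasso_close_to_oracle {n p : ℕ} (hn : 0 < n)
    (X : Matrix (Fin n) (Fin p) ℝ) (β : Fin p → ℝ) (z : Fin n → ℝ)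
    (lam : ℝ) (hlam : 0 < lam)
    (bL : Fin p → ℝ)
    (hmin : ∀ b : Fin p → ℝ,
      (1 / (2 * n)) * ∑ i, ((X.mulVec β + z) i - X.mulVec bL i) ^ 2 + lam * ∑ j, |bL j| ≤
        (1 / (2 * n)) * ∑ i, ((X.mulVec β + z) i - X.mulVec b i) ^ 2 + lam * ∑ j, |b j|)
    (bO : Fin p → ℝ)
    (hbO : bO = fun j => softThreshold lam (β j + (Xᵀ.mulVec z) j / n))
    (Δ : ℝ) (hΔ : Δ ∈ Set.Ioo (0 : ℝ) 1)
    (S : Finset (Fin p))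
    (hsuppL : ∀ j, bL j ≠ 0 → j ∈ S)
    (hsuppO : ∀ j, bO j ≠ 0 → j ∈ S)
    (hsuppβ : ∀ j, β j ≠ 0 → j ∈ S)
    (heig : ∀ v : Fin p → ℝ, (∀ j, v j ≠ 0 → j ∈ S) →
      (1 - Δ) * ∑ j, (v j) ^ 2 ≤ (1 / n) * ∑ i, (X.mulVec v i) ^ 2 ∧
        (1 / n) * ∑ i, (X.mulVec v i) ^ 2 ≤ (1 + Δ) * ∑ j, (v j) ^ 2) :
    Real.sqrt (∑ j, (bO j - bL j) ^ 2) ≤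
      (Δ / (1 - Δ)) * Real.sqrt (∑ j, (bO j - β j) ^ 2) := by
  obtain ⟨hΔ0, hΔ1⟩ := hΔ
  have hn' : (0:ℝ) < n := Nat.cast_pos.mpr hn
  have hbOj : ∀ j, bO j = softThreshold lam (β j + (Xᵀ.mulVec z) j / n) := fun j => by
    rw [hbO]
  -- abbreviations (as plain local notation via `set` on sums would be fragile; use haves)
  set L : ℝ := ∑ j, |bL j| with hL
  set O : ℝ := ∑ j, |bO j| with hO
  set A : ℝ := ∑ i, ((X.mulVec β + z) i - X.mulVec bL i) *
      X.mulVec (fun j => bO j - bL j) i with hA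
  set P : ℝ := ∑ i, (X.mulVec (fun j => bO j - bL j) i) ^ 2 with hP
  set Qw : ℝ := ∑ i, (X.mulVec (fun j => bO j - β j) i) ^ 2 with hQw
  set R : ℝ := ∑ i, X.mulVec (fun j => bO j - β j) i *
      X.mulVec (fun j => bO j - bL j) i with hR
  set D2 : ℝ := ∑ j, (bO j - bL j) ^ 2 with hD2
  set W2 : ℝ := ∑ j, (bO j - β j) ^ 2 with hW2
  set I : ℝ := ∑ j, (bO j - β j) * (bO j - bL j) with hI
  have hPpos : 0 ≤ P := Finset.sum_nonneg fun i _ => sq_nonneg _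
  have hD2pos : 0 ≤ D2 := Finset.sum_nonneg fun j _ => sq_nonneg _
  have hW2pos : 0 ≤ W2 := Finset.sum_nonneg fun j _ => sq_nonneg _
  -- Lasso variational inequality
  have hC : (1/(n:ℝ)) * A ≤ lam * (O - L) := by
    have hcn' : (1/(n:ℝ)) * A = (1/(2*(n:ℝ))) * (2*A) := by
      have hne : (n:ℝ) ≠ 0 := ne_of_gt hn'
      field_simp
    have key : ∀ t : ℝ, 0 < t → t ≤ 1 →
        (1/(2*(n:ℝ))) * (2*A) ≤ lam * (O - L) + t * ((1/(2*(n:ℝ))) * P) := by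
      intro t ht ht1
      have hm := hmin (fun j => bL j + t * (bO j - bL j))
      have hq : ∀ i, (X.mulVec β + z) i - X.mulVec (fun j => bL j + t * (bO j - bL j)) i
          = 1 * ((X.mulVec β + z) i - X.mulVec bL i)
            + (-t) * X.mulVec (fun j => bO j - bL j) i := by
        intro i
        have e1 : X.mulVec (fun j => 1 * bL j + t * (bO j - bL j)) i
            = 1 * X.mulVec bL i + t * X.mulVec (fun j => bO j - bL j) i := mulVec_lin X 1 t _ _ i
        have e2 : (fun j => (1:ℝ) * bL j + t * (bO j - bL j))
            = fun j => bL j + t * (bO j - bL j) := funext fun j => by ring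
        rw [e2] at e1
        rw [e1]; ring
      have hsum : ∑ i, ((X.mulVec β + z) i - X.mulVec (fun j => bL j + t * (bO j - bL j)) i)^2
          = 1^2 * (∑ i, ((X.mulVec β + z) i - X.mulVec bL i)^2) + 2*1*(-t)*A + (-t)^2 * P := by
        rw [hA, hP]
        calc ∑ i, ((X.mulVec β + z) i - X.mulVec (fun j => bL j + t * (bO j - bL j)) i)^2
            = ∑ i, (1 * ((X.mulVec β + z) i - X.mulVec bL i)
                + (-t) * X.mulVec (fun j => bO j - bL j) i)^2 :=
              Finset.sum_congr rfl fun i _ => by rw [hq i]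
          _ = _ := sum_sq_comb 1 (-t) _ _
      have hl1 : ∑ j, |bL j + t * (bO j - bL j)| ≤ (1 - t) * L + t * O := by
        rw [hL, hO, Finset.mul_sum, Finset.mul_sum, ← Finset.sum_add_distrib]
        refine Finset.sum_le_sum fun j _ => ?_
        have e : bL j + t * (bO j - bL j) = (1 - t) * bL j + t * bO j := by ring
        rw [e]
        calc |(1 - t) * bL j + t * bO j| ≤ |(1 - t) * bL j| + |t * bO j| := abs_add_le _ _
          _ = (1 - t) * |bL j| + t * |bO j| := by
              rw [abs_mul, abs_mul, abs_of_nonneg (by linarith : (0:ℝ) ≤ 1 - t),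
                abs_of_nonneg ht.le]
      rw [hsum] at hm
      have h2 : lam * ∑ j, |bL j + t * (bO j - bL j)| ≤ lam * ((1 - t) * L + t * O) :=
        mul_le_mul_of_nonneg_left hl1 hlam.le
      have hE : 0 ≤ t * (lam * (O - L) + t * ((1/(2*(n:ℝ))) * P) - (1/(2*(n:ℝ))) * (2*A)) := by
        nlinarith [hm, h2]
      nlinarith [hE, ht]
    by_contra hcon
    push_neg at hcon
    have hK : (0:ℝ) ≤ (1/(2*(n:ℝ))) * P := mul_nonneg (by positivity) hPpos
    set K := (1/(2*(n:ℝ))) * P with hKdef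
    set ε := (1/(n:ℝ)) * A - lam * (O - L) with hεdef
    have hε : 0 < ε := by rw [hεdef]; linarith
    have ht0 : 0 < ε / (K + 1) := div_pos hε (by linarith)
    have h2 := key (min 1 (ε / (K + 1))) (lt_min one_pos ht0) (min_le_left _ _)
    have h3 : min 1 (ε / (K + 1)) * K < ε := by
      calc min 1 (ε / (K + 1)) * K ≤ (ε / (K + 1)) * K :=
          mul_le_mul_of_nonneg_right (min_le_right _ _) hK
        _ < ε := by
          rw [div_mul_eq_mul_div, div_lt_iff₀ (by linarith)]
          nlinarith
    linarith [h2, h3, hε, hεdef, hcn']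
  -- oracle variational inequality
  have hB : ∑ j, ((β j + (Xᵀ.mulVec z) j / n) - bO j) * (bL j - bO j) ≤ lam * (L - O) := by
    have h1 : ∀ j, ((β j + (Xᵀ.mulVec z) j / n) - bO j) * (bL j - bO j) ≤
        lam * (|bL j| - |bO j|) := by
      intro j; rw [hbOj j]
      exact soft_subgrad lam _ (bL j) hlam
    calc ∑ j, ((β j + (Xᵀ.mulVec z) j / n) - bO j) * (bL j - bO j)
        ≤ ∑ j, lam * (|bL j| - |bO j|) := Finset.sum_le_sum (fun j _ => h1 j)
      _ = lam * (L - O) := by rw [← Finset.mul_sum, Finset.sum_sub_distrib]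
  -- combination
  have hstar : (1/(n:ℝ)) * P ≤ (1/(n:ℝ)) * R - I := by
    -- rewrite A
    have hXl : ∀ i, (X.mulVec β + z) i - X.mulVec bL i
        = X.mulVec (fun j => bO j - bL j) i - X.mulVec (fun j => bO j - β j) i + z i := by
      intro i
      have e1 : X.mulVec (fun j => 1 * (bO j - bL j) + (-1) * (bO j - β j)) i
          = 1 * X.mulVec (fun j => bO j - bL j) i + (-1) * X.mulVec (fun j => bO j - β j) i :=
        mulVec_lin X 1 (-1) _ _ i
      have e2 : (fun j => 1 * (bO j - bL j) + (-1) * (bO j - β j))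
          = fun j => 1 * β j + (-1) * bL j := funext fun j => by ring
      have e3 : X.mulVec (fun j => 1 * β j + (-1) * bL j) i
          = 1 * X.mulVec β i + (-1) * X.mulVec bL i := mulVec_lin X 1 (-1) _ _ i
      rw [e2, e3] at e1
      simp only [Pi.add_apply]
      linarith [e1]
    have hAeq : A = P - R + ∑ i, z i * X.mulVec (fun j => bO j - bL j) i := by
      rw [hA, hP, hR]
      calc ∑ i, ((X.mulVec β + z) i - X.mulVec bL i) * X.mulVec (fun j => bO j - bL j) i
          = ∑ i, ((X.mulVec (fun j => bO j - bL j) i) ^ 2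
              - X.mulVec (fun j => bO j - β j) i * X.mulVec (fun j => bO j - bL j) i
              + z i * X.mulVec (fun j => bO j - bL j) i) :=
            Finset.sum_congr rfl fun i _ => by rw [hXl i]; ring
        _ = _ := by rw [Finset.sum_add_distrib, Finset.sum_sub_distrib]
    have hSOeq : ∑ j, ((β j + (Xᵀ.mulVec z) j / n) - bO j) * (bL j - bO j)
        = I - (1/(n:ℝ)) * ∑ j, (Xᵀ.mulVec z) j * (bO j - bL j) := by
      rw [hI, Finset.mul_sum, ← Finset.sum_sub_distrib]
      refine Finset.sum_congr rfl fun j _ => ?_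
      have hne : (n:ℝ) ≠ 0 := ne_of_gt hn'
      field_simp
      ring
    have htr : ∑ j, (Xᵀ.mulVec z) j * (bO j - bL j)
        = ∑ i, z i * X.mulVec (fun j => bO j - bL j) i := transpose_dot X z _
    rw [hSOeq, htr] at hB
    have hCA : (1/(n:ℝ)) * A = (1/(n:ℝ)) * P - (1/(n:ℝ)) * R
        + (1/(n:ℝ)) * ∑ i, z i * X.mulVec (fun j => bO j - bL j) i := by
      rw [hAeq]; ring
    rw [hCA] at hC
    have hlamz : lam * (O - L) + lam * (L - O) = 0 := by ring
    linarith
  -- support conditions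
  have hzero : ∀ j, j ∉ S → bO j = 0 ∧ bL j = 0 ∧ β j = 0 := fun j hj =>
    ⟨by_contra fun h => hj (hsuppO j h), by_contra fun h => hj (hsuppL j h),
      by_contra fun h => hj (hsuppβ j h)⟩
  have hd_supp : ∀ j, (fun j => bO j - bL j) j ≠ 0 → j ∈ S := by
    intro j hv
    by_contra hj
    obtain ⟨h1, h2, _⟩ := hzero j hj
    simp [h1, h2] at hv
  -- final analysis
  have hd_eig := heig (fun j => bO j - bL j) hd_supp
  rcases eq_or_lt_of_le hD2pos with hD0 | hD0
  · rw [← hD0, Real.sqrt_zero]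
    exact mul_nonneg (div_nonneg hΔ0.le (by linarith)) (Real.sqrt_nonneg _)
  · have ha : 0 < Real.sqrt D2 := Real.sqrt_pos.mpr hD0
    have ha2 : Real.sqrt D2 ^ 2 = D2 := Real.sq_sqrt hD2pos
    rcases eq_or_lt_of_le hW2pos with hW0 | hW0
    · -- w ≡ 0, contradiction with D2 > 0
      exfalso
      have hw0 : ∀ j, bO j - β j = 0 := by
        intro j
        have := (Finset.sum_eq_zero_iff_of_nonneg
          (fun j _ => sq_nonneg (bO j - β j))).mp hW0.symm j (Finset.mem_univ j)
        exact (pow_eq_zero_iff two_ne_zero).mp this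
      have hR0 : R = 0 := by
        rw [hR]
        refine Finset.sum_eq_zero fun i _ => ?_
        have : X.mulVec (fun j => bO j - β j) i = 0 := by
          rw [show (fun j => bO j - β j) = (fun _ => (0:ℝ)) from funext hw0]
          simp [Matrix.mulVec, dotProduct]
        rw [this, zero_mul]
      have hI0 : I = 0 := by
        rw [hI]
        exact Finset.sum_eq_zero fun j _ => by rw [hw0 j, zero_mul]
      have h1 := hd_eig.1
      rw [← hD2, ← hP] at h1
      have h2 : (1:ℝ)/n * R - I = 0 := by rw [hR0, hI0]; ring
      linarith [mul_pos (show (0:ℝ) < 1-Δ by linarith) hD0]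
    · have hc : 0 < Real.sqrt W2 := Real.sqrt_pos.mpr hW0
      have hc2 : Real.sqrt W2 ^ 2 = W2 := Real.sq_sqrt hW2pos
      set a : ℝ := Real.sqrt D2 with hadef
      set c : ℝ := Real.sqrt W2 with hcdef
      -- bilinear bound : (1/n) R - I ≤ Δ a c
      have hbil : (1/(n:ℝ)) * R - I ≤ Δ * (a * c) := by
        have hvp_supp : ∀ j, (fun j => a * (bO j - β j) + c * (bO j - bL j)) j ≠ 0 → j ∈ S := by
          intro j hv
          by_contra hj
          obtain ⟨h1, h2, h3⟩ := hzero j hj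
          simp [h1, h2, h3] at hv
        have hvm_supp : ∀ j, (fun j => a * (bO j - β j) + (-c) * (bO j - bL j)) j ≠ 0 → j ∈ S := by
          intro j hv
          by_contra hj
          obtain ⟨h1, h2, h3⟩ := hzero j hj
          simp [h1, h2, h3] at hv
        have hp := (heig _ hvp_supp).2
        have hm := (heig _ hvm_supp).1
        -- expand the sums
        have ep1 : ∑ j, (a * (bO j - β j) + c * (bO j - bL j)) ^ 2
            = a ^ 2 * W2 + 2 * a * c * I + c ^ 2 * D2 := by
          rw [hW2, hI, hD2]; exact sum_sq_comb a c _ _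
        have em1 : ∑ j, (a * (bO j - β j) + (-c) * (bO j - bL j)) ^ 2
            = a ^ 2 * W2 + 2 * a * (-c) * I + (-c) ^ 2 * D2 := by
          rw [hW2, hI, hD2]; exact sum_sq_comb a (-c) _ _
        have ep2 : ∑ i, (X.mulVec (fun j => a * (bO j - β j) + c * (bO j - bL j)) i) ^ 2
            = a ^ 2 * Qw + 2 * a * c * R + c ^ 2 * P := by
          rw [hQw, hR, hP]
          calc ∑ i, (X.mulVec (fun j => a * (bO j - β j) + c * (bO j - bL j)) i) ^ 2
              = ∑ i, (a * X.mulVec (fun j => bO j - β j) i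
                  + c * X.mulVec (fun j => bO j - bL j) i) ^ 2 :=
                Finset.sum_congr rfl fun i _ => by rw [mulVec_lin X a c _ _ i]
            _ = _ := sum_sq_comb a c _ _
        have em2 : ∑ i, (X.mulVec (fun j => a * (bO j - β j) + (-c) * (bO j - bL j)) i) ^ 2
            = a ^ 2 * Qw + 2 * a * (-c) * R + (-c) ^ 2 * P := by
          rw [hQw, hR, hP]
          calc ∑ i, (X.mulVec (fun j => a * (bO j - β j) + (-c) * (bO j - bL j)) i) ^ 2
              = ∑ i, (a * X.mulVec (fun j => bO j - β j) i
                  + (-c) * X.mulVec (fun j => bO j - bL j) i) ^ 2 :=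
                Finset.sum_congr rfl fun i _ => by rw [mulVec_lin X a (-c) _ _ i]
            _ = _ := sum_sq_comb a (-c) _ _
        rw [ep1, ep2] at hp
        rw [em1, em2] at hm
        -- hp : (1/n)(a²Qw + 2acR + c²P) ≤ (1+Δ)(a²W2 + 2acI + c²D2)
        -- hm : (1-Δ)(a²W2 - 2acI + c²D2) ≤ (1/n)(a²Qw - 2acR + c²P)
        -- subtract, using a² = D2? no: a² = D2, c² = W2
        have hac : 0 < a * c := mul_pos ha hc
        have hsum : (1/(n:ℝ)) * (a^2*Qw + 2*a*c*R + c^2*P)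
              - (1/(n:ℝ)) * (a^2*Qw + 2*a*(-c)*R + (-c)^2*P)
            ≤ (1+Δ)*(a^2*W2 + 2*a*c*I + c^2*D2)
              - (1-Δ)*(a^2*W2 + 2*a*(-c)*I + (-c)^2*D2) := by
          linarith [hp, hm]
        have e1 : (1/(n:ℝ)) * (a^2*Qw + 2*a*c*R + c^2*P)
            - (1/(n:ℝ)) * (a^2*Qw + 2*a*(-c)*R + (-c)^2*P)
            = 4*(a*c)*((1/(n:ℝ))*R) := by ring
        have e2 : (1+Δ)*(a^2*W2 + 2*a*c*I + c^2*D2)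
            - (1-Δ)*(a^2*W2 + 2*a*(-c)*I + (-c)^2*D2)
            = 2*Δ*(a^2*W2 + c^2*D2) + 4*(a*c)*I := by ring
        have e3 : a^2*W2 + c^2*D2 = 2*(a*c)^2 := by
          rw [mul_pow, ha2, hc2]; ring
        rw [e1, e2, e3] at hsum
        have key : 4*(a*c)*((1/(n:ℝ))*R - I) ≤ 4*(a*c)*(Δ*(a*c)) := by
          have r1 : 4*(a*c)*((1/(n:ℝ))*R - I) = 4*(a*c)*((1/(n:ℝ))*R) - 4*(a*c)*I := by ring
          have r2 : 4*(a*c)*(Δ*(a*c)) = 2*Δ*(2*(a*c)^2) := by ring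
          rw [r1, r2]; linarith [hsum]
        exact (mul_le_mul_iff_right₀ (by linarith : (0:ℝ) < 4*(a*c))).mp key
      have h1 := hd_eig.1
      rw [← hD2, ← hP] at h1
      -- (1-Δ) a^2 ≤ Δ a c
      have hchain : (1 - Δ) * D2 ≤ Δ * (a * c) := by linarith [h1, hstar, hbil]
      have hfin : (1 - Δ) * a ≤ Δ * c := by
        refine le_of_mul_le_mul_right ?_ ha
        calc ((1 - Δ) * a) * a = (1 - Δ) * a ^ 2 := by ring
          _ = (1 - Δ) * D2 := by rw [ha2]
          _ ≤ Δ * (a * c) := hchain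
          _ = (Δ * c) * a := by ring
      rw [div_mul_eq_mul_div, le_div_iff₀ (by linarith)]
      rw [mul_comm]
      exact hfin
end
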